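/- arXiv:2412.17681 — 5 statements merged into one kernel-verified Lean document; each statement's English description precedes it below -/
import Mathlib

section
/- Let A be a finite-dimensional algebra over a field k, let Z be an A-module decomposing as Z = 𝟙 ⊕ W (i.e., 𝟙 is a direct summand of Z in a k-linear category C with End(𝟙) = k), and let N ⊆ End(Z) be a k-subspace with N^n = 0 for some n (meaning every product of n elements of N is zero). Then there exists a retraction r : Z → 𝟙 (i.e., r admits a section) such that r ∘ x ∘ a = 0 for every x ∈ N and every morphism a : 𝟙 → Z. -/
open CategoryTheory

/-- Let `C` be a `k`-linear category with `End(I) = k·id`, let `I` be a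
direct summand of `Z`, and let `N ⊆ End(Z)` be a nilpotent subspace (every product of `n`
elements of `N` vanishes for some `n ≥ 1`). Then there is a retraction `r : Z ⟶ I`
(admitting a section `s` with `s ≫ r = 𝟙 I`) such that `a ≫ x ≫ r = 0` for all `x ∈ N`
and all `a : I ⟶ Z`. -/
theorem statement1 (k : Type*) [Field k] (C : Type*) [Category C] [Preadditive C] [Linear k C]
    (Z I : C)
    (hI : ∀ f : I ⟶ I, ∃ c : k, f = c • 𝟙 I)
    (hsummand : ∃ (r : Z ⟶ I) (s : I ⟶ Z), s ≫ r = 𝟙 I)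
    (N : Submodule k (CategoryTheory.End Z))
    (hN : ∃ n : ℕ, 0 < n ∧ ∀ f : Fin n → CategoryTheory.End Z,
      (∀ i, f i ∈ N) → (List.ofFn f).prod = 0) :
    ∃ (r : Z ⟶ I), (∃ s : I ⟶ Z, s ≫ r = 𝟙 I) ∧
      ∀ x ∈ N, ∀ a : I ⟶ Z, a ≫ x ≫ r = 0 := by
  obtain ⟨r₀, s₀, hrs⟩ := hsummand
  by_cases h1 : (𝟙 I : I ⟶ I) = 0
  · exact ⟨0, ⟨s₀, by simp [h1]⟩, by intro x hx a; simp⟩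
  obtain ⟨n, hn, hNn⟩ := hN
  set Q : ℕ → Prop := fun j => ∃ (b : Z ⟶ I) (a : I ⟶ Z) (f : Fin j → CategoryTheory.End Z),
      (∀ i, f i ∈ N) ∧ a ≫ ((List.ofFn f).prod : Z ⟶ Z) ≫ b ≠ 0 with hQdef
  have hQ0 : Q 0 := by
    refine ⟨r₀, s₀, ![], by simp, ?_⟩
    simpa [hrs] using h1
  have hQn : ¬ Q n := by
    rintro ⟨b, a, f, hf, hne⟩
    exact hne (by rw [show ((List.ofFn f).prod : Z ⟶ Z) = (0 : Z ⟶ Z) from hNn f hf]; simp)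
  have key : ∃ m, Q m ∧ ¬ Q (m + 1) := by
    by_contra h
    push_neg at h
    have hall : ∀ j, Q j := by
      intro j
      induction j with
      | zero => exact hQ0
      | succ j ih => exact h j ih
    exact hQn (hall n)
  obtain ⟨m, ⟨b, a, f, hf, hne⟩, hm1⟩ := key
  set p : Z ⟶ Z := ((List.ofFn f).prod : Z ⟶ Z) with hp
  obtain ⟨c, hc⟩ := hI (a ≫ p ≫ b)
  have hc0 : c ≠ 0 := by
    rintro rfl
    exact hne (by simpa using hc)
  refine ⟨c⁻¹ • (p ≫ b), ⟨a, ?_⟩, ?_⟩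
  · rw [Linear.comp_smul, ← Category.assoc, Category.assoc, hc, smul_smul,
      inv_mul_cancel₀ hc0, one_smul]
  · intro x hx a'
    have hmem : ∀ i, (Fin.snoc f x : Fin (m+1) → CategoryTheory.End Z) i ∈ N := by
      intro i
      refine Fin.lastCases ?_ ?_ i
      · simpa using hx
      · intro j; simpa using hf j
    have hzero : a' ≫ ((List.ofFn (Fin.snoc f x)).prod : Z ⟶ Z) ≫ b = 0 := by
      by_contra hne'
      exact hm1 ⟨b, a', Fin.snoc f x, hmem, hne'⟩
    have hsnoc : ((List.ofFn (Fin.snoc f x)).prod : CategoryTheory.End Z)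
        = (List.ofFn f).prod * x := by
      rw [List.ofFn_succ']
      simp
    have hxp : ((List.ofFn (Fin.snoc f x)).prod : Z ⟶ Z) = (x : Z ⟶ Z) ≫ p := by
      rw [hsnoc]; rfl
    rw [hxp] at hzero
    rw [Linear.comp_smul, Linear.comp_smul, smul_eq_zero]
    right
    simp only [← Category.assoc] at hzero ⊢
    exact hzero
end

section
/- Let C be an abelian braided monoidal category with right exact tensor product, and let 0 → Y → Z → X → 0 be a short exact sequence in C. If X and Y are rigid, then Z is rigid. -/
open CategoryTheory MonoidalCategory Limits

/-- An object is rigid if it has both a left dual and a right dual (with exact pairings). -/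
def RigidObj {C : Type*} [Category C] [MonoidalCategory C] (X : C) : Prop :=
  Nonempty (HasLeftDual X) ∧ Nonempty (HasRightDual X)

namespace Statement10Aux

variable {C : Type*} [Category C] [MonoidalCategory C]

theorem L1 {X Z X' : C} (p : Z ⟶ X) [ExactPairing X X'] :
    (η_ X X' ▷ Z) ≫ (α_ X X' Z).hom ≫ (X ◁ ((X' ◁ p) ≫ ε_ X X')) ≫ (ρ_ X).hom =
      (𝟙_ C ◁ p) ≫ (λ_ X).hom := by
  rw [MonoidalCategory.whiskerLeft_comp]
  simp only [Category.assoc]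
  calc _ = (η_ X X' ▷ Z) ≫ ((X ⊗ X') ◁ p) ≫ (α_ X X' X).hom ≫ (X ◁ ε_ X X') ≫ (ρ_ X).hom := by
        rw [← associator_naturality_right_assoc]
    _ = (𝟙_ C ◁ p) ≫ (η_ X X' ▷ X) ≫ (α_ X X' X).hom ≫ (X ◁ ε_ X X') ≫ (ρ_ X).hom := by
        rw [← whisker_exchange_assoc]
    _ = (𝟙_ C ◁ p) ≫ (λ_ X).hom ≫ (ρ_ X).inv ≫ (ρ_ X).hom := by
        rw [ExactPairing.evaluation_coevaluation_assoc]
    _ = (𝟙_ C ◁ p) ≫ (λ_ X).hom := by simp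

theorem chase1 {X Z X' : C} (p : Z ⟶ X) [ExactPairing X X'] {E : C}
    (t : E ⟶ Z ⊗ X') (s : E ⟶ 𝟙_ C)
    (hts : t ≫ (p ▷ X') = s ≫ η_ X X') :
    ((t ▷ Z) ≫ (α_ Z X' Z).hom ≫ (Z ◁ ((X' ◁ p) ≫ ε_ X X')) ≫ (ρ_ Z).hom) ≫ p =
      ((s ▷ Z) ≫ (λ_ Z).hom) ≫ p := by
  calc _ = (t ▷ Z) ≫ (α_ Z X' Z).hom ≫ (Z ◁ ((X' ◁ p) ≫ ε_ X X')) ≫ (p ▷ 𝟙_ C) ≫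
        (ρ_ X).hom := by
        simp only [Category.assoc, rightUnitor_naturality]
    _ = (t ▷ Z) ≫ (α_ Z X' Z).hom ≫ (p ▷ (X' ⊗ Z)) ≫ (X ◁ ((X' ◁ p) ≫ ε_ X X')) ≫
        (ρ_ X).hom := by
        rw [whisker_exchange_assoc]
    _ = (t ▷ Z) ≫ ((p ▷ X') ▷ Z) ≫ (α_ X X' Z).hom ≫ (X ◁ ((X' ◁ p) ≫ ε_ X X')) ≫
        (ρ_ X).hom := by
        rw [associator_naturality_left_assoc]
    _ = ((t ≫ (p ▷ X')) ▷ Z) ≫ (α_ X X' Z).hom ≫ (X ◁ ((X' ◁ p) ≫ ε_ X X')) ≫ (ρ_ X).hom := by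
        rw [comp_whiskerRight_assoc]
    _ = (s ▷ Z) ≫ (η_ X X' ▷ Z) ≫ (α_ X X' Z).hom ≫ (X ◁ ((X' ◁ p) ≫ ε_ X X')) ≫
        (ρ_ X).hom := by
        rw [hts, comp_whiskerRight_assoc]
    _ = (s ▷ Z) ≫ (𝟙_ C ◁ p) ≫ (λ_ X).hom := by rw [L1]
    _ = ((s ▷ Z) ≫ (λ_ Z).hom) ≫ p := by
        simp only [Category.assoc, leftUnitor_naturality]

theorem chase2a {Y Z X' : C} (i : Y ⟶ Z) (e : X' ⊗ Z ⟶ 𝟙_ C) :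
    ((i ▷ X') ▷ Z) ≫ (α_ Z X' Z).hom ≫ (Z ◁ e) ≫ (ρ_ Z).hom =
      (α_ Y X' Z).hom ≫ (Y ◁ e) ≫ (ρ_ Y).hom ≫ i := by
  rw [associator_naturality_left_assoc, ← whisker_exchange_assoc, rightUnitor_naturality]

theorem chase2 {Y Y' X' Z : C} [ExactPairing Y Y'] {E : C} (k : Y ⊗ X' ⟶ E)
    (c : E ⊗ Z ⟶ Y) (e : X' ⊗ Z ⟶ 𝟙_ C)
    (hkc : (k ▷ Z) ≫ c = (α_ Y X' Z).hom ≫ (Y ◁ e) ≫ (ρ_ Y).hom) :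
    ((Y' ◁ k) ▷ Z) ≫ (α_ Y' E Z).hom ≫ (Y' ◁ c) ≫ ε_ Y Y' =
      (((α_ Y' Y X').inv ≫ (ε_ Y Y' ▷ X') ≫ (λ_ X').hom) ▷ Z) ≫ e := by
  calc _ = 𝟙 _ ⊗≫ Y' ◁ ((k ▷ Z) ≫ c) ⊗≫ ε_ Y Y' := by monoidal
    _ = 𝟙 _ ⊗≫ Y' ◁ ((α_ Y X' Z).hom ≫ (Y ◁ e) ≫ (ρ_ Y).hom) ⊗≫ ε_ Y Y' := by rw [hkc]
    _ = 𝟙 _ ⊗≫ (((Y' ⊗ Y : C) ◁ e) ≫ (ε_ Y Y' ▷ 𝟙_ C)) ⊗≫ 𝟙 _ := by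
        monoidal
    _ = 𝟙 _ ⊗≫ ((ε_ Y Y' ▷ (X' ⊗ Z)) ≫ (𝟙_ C ◁ e)) ⊗≫ 𝟙 _ := by rw [← whisker_exchange]
    _ = _ := by monoidal

theorem chase3 {Y Y' X' Z : C} [ExactPairing Y Y'] {E D : C} (i : Y ⟶ Z) (k : Y ⊗ X' ⟶ E)
    (t : E ⟶ Z ⊗ X') (u : Y' ⊗ E ⟶ D) (v : X' ⟶ D) (hkt : k ≫ t = i ▷ X')
    (g : Y' ⊗ (Y ⊗ X') ⟶ X') (hg : g = (α_ Y' Y X').inv ≫ (ε_ Y Y' ▷ X') ≫ (λ_ X').hom)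
    (huv : (Y' ◁ k) ≫ u = g ≫ v) :
    k ≫ t ≫ (Z ◁ v) =
      k ≫ (λ_ E).inv ≫ (η_ Y Y' ▷ E) ≫ (α_ Y Y' E).hom ≫ (Y ◁ u) ≫ (i ▷ D) := by
  have L2 : (λ_ (Y ⊗ X')).inv ≫ (η_ Y Y' ▷ (Y ⊗ X')) ≫ (α_ Y Y' (Y ⊗ X')).hom ≫
      (Y ◁ ((α_ Y' Y X').inv ≫ (ε_ Y Y' ▷ X') ≫ (λ_ X').hom)) = 𝟙 (Y ⊗ X') := by
    calc _ = 𝟙 _ ⊗≫ (η_ Y Y' ▷ Y ≫ (α_ Y Y' Y).hom ≫ Y ◁ ε_ Y Y') ▷ X' ⊗≫ 𝟙 _ := by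
          monoidal
      _ = 𝟙 _ ⊗≫ ((λ_ Y).hom ≫ (ρ_ Y).inv) ▷ X' ⊗≫ 𝟙 _ := by
          rw [ExactPairing.evaluation_coevaluation]
      _ = _ := by monoidal
  subst hg
  calc k ≫ t ≫ (Z ◁ v)
      = (i ▷ X') ≫ (Z ◁ v) := by rw [← Category.assoc, hkt]
    _ = (Y ◁ v) ≫ (i ▷ D) := by rw [← whisker_exchange]
    _ = ((λ_ (Y ⊗ X')).inv ≫ (η_ Y Y' ▷ (Y ⊗ X')) ≫ (α_ Y Y' (Y ⊗ X')).hom ≫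
          (Y ◁ ((α_ Y' Y X').inv ≫ (ε_ Y Y' ▷ X') ≫ (λ_ X').hom))) ≫ (Y ◁ v) ≫ (i ▷ D) := by
        rw [L2, Category.id_comp]
    _ = (λ_ (Y ⊗ X')).inv ≫ (η_ Y Y' ▷ (Y ⊗ X')) ≫ (α_ Y Y' (Y ⊗ X')).hom ≫
          (Y ◁ (((α_ Y' Y X').inv ≫ (ε_ Y Y' ▷ X') ≫ (λ_ X').hom) ≫ v)) ≫ (i ▷ D) := by
        simp only [MonoidalCategory.whiskerLeft_comp, Category.assoc]
    _ = (λ_ (Y ⊗ X')).inv ≫ (η_ Y Y' ▷ (Y ⊗ X')) ≫ (α_ Y Y' (Y ⊗ X')).hom ≫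
          (Y ◁ ((Y' ◁ k) ≫ u)) ≫ (i ▷ D) := by rw [huv]
    _ = (λ_ (Y ⊗ X')).inv ≫ (η_ Y Y' ▷ (Y ⊗ X')) ≫ ((Y ⊗ Y') ◁ k) ≫ (α_ Y Y' E).hom ≫
          (Y ◁ u) ≫ (i ▷ D) := by
        simp only [MonoidalCategory.whiskerLeft_comp, Category.assoc]
        rw [← associator_naturality_right_assoc]
    _ = (λ_ (Y ⊗ X')).inv ≫ (𝟙_ C ◁ k) ≫ (η_ Y Y' ▷ E) ≫ (α_ Y Y' E).hom ≫
          (Y ◁ u) ≫ (i ▷ D) := by rw [whisker_exchange_assoc]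
    _ = _ := by rw [leftUnitor_inv_naturality_assoc]

theorem chase4A {Z X' D E : C} (t : E ⟶ Z ⊗ X') (v : X' ⟶ D) (ε : D ⊗ Z ⟶ 𝟙_ C)
    (e : X' ⊗ Z ⟶ 𝟙_ C) (hεv : (v ▷ Z) ≫ ε = e) :
    ((t ≫ (Z ◁ v)) ▷ Z) ≫ (α_ Z D Z).hom ≫ (Z ◁ ε) =
      (t ▷ Z) ≫ (α_ Z X' Z).hom ≫ (Z ◁ e) := by
  rw [comp_whiskerRight, Category.assoc, associator_naturality_middle_assoc,
    ← MonoidalCategory.whiskerLeft_comp, hεv]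

theorem chase4B {Y Y' Z D E : C} [ExactPairing Y Y'] (i : Y ⟶ Z) (u : Y' ⊗ E ⟶ D)
    (c : E ⊗ Z ⟶ Y) (ε : D ⊗ Z ⟶ 𝟙_ C)
    (hεu : (u ▷ Z) ≫ ε = (α_ Y' E Z).hom ≫ (Y' ◁ c) ≫ ε_ Y Y') :
    (((λ_ E).inv ≫ (η_ Y Y' ▷ E) ≫ (α_ Y Y' E).hom ≫ (Y ◁ u) ≫ (i ▷ D)) ▷ Z) ≫
      (α_ Z D Z).hom ≫ (Z ◁ ε) = c ≫ i ≫ (ρ_ Z).inv := by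
  calc _ = 𝟙 _ ⊗≫ η_ Y Y' ▷ (E ⊗ Z) ⊗≫ Y ◁ (u ▷ Z) ⊗≫
        ((i ▷ (D ⊗ Z)) ≫ (Z ◁ ε)) ⊗≫ 𝟙 _ := by monoidal
    _ = 𝟙 _ ⊗≫ η_ Y Y' ▷ (E ⊗ Z) ⊗≫ Y ◁ (u ▷ Z) ⊗≫
        ((Y ◁ ε) ≫ (i ▷ 𝟙_ C)) ⊗≫ 𝟙 _ := by rw [← whisker_exchange]
    _ = 𝟙 _ ⊗≫ η_ Y Y' ▷ (E ⊗ Z) ⊗≫ (Y ◁ ((u ▷ Z) ≫ ε)) ⊗≫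
        (i ▷ 𝟙_ C) ⊗≫ 𝟙 _ := by monoidal
    _ = 𝟙 _ ⊗≫ η_ Y Y' ▷ (E ⊗ Z) ⊗≫ (Y ◁
        ((α_ Y' E Z).hom ≫ (Y' ◁ c) ≫ ε_ Y Y')) ⊗≫ (i ▷ 𝟙_ C) ⊗≫ 𝟙 _ := by rw [hεu]
    _ = 𝟙 _ ⊗≫ (η_ Y Y' ▷ (E ⊗ Z) ≫ ((Y ⊗ Y' : C) ◁ c)) ⊗≫
        (Y ◁ ε_ Y Y') ⊗≫ (i ▷ 𝟙_ C) ⊗≫ 𝟙 _ := by monoidal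
    _ = 𝟙 _ ⊗≫ ((𝟙_ C ◁ c) ≫ (η_ Y Y' ▷ Y)) ⊗≫
        (Y ◁ ε_ Y Y') ⊗≫ (i ▷ 𝟙_ C) ⊗≫ 𝟙 _ := by rw [whisker_exchange]
    _ = 𝟙 _ ⊗≫ (𝟙_ C ◁ c) ⊗≫ (η_ Y Y' ▷ Y ≫ (α_ Y Y' Y).hom ≫ Y ◁ ε_ Y Y') ⊗≫
        (i ▷ 𝟙_ C) ⊗≫ 𝟙 _ := by monoidal
    _ = 𝟙 _ ⊗≫ (𝟙_ C ◁ c) ⊗≫ ((λ_ Y).hom ≫ (ρ_ Y).inv) ⊗≫ (i ▷ 𝟙_ C) ⊗≫ 𝟙 _ := by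
        rw [ExactPairing.evaluation_coevaluation]
    _ = _ := by monoidal

theorem chase5 {Z D : C} (η : 𝟙_ C ⟶ Z ⊗ D) (ε : D ⊗ Z ⟶ 𝟙_ C)
    (zig1 : (η ▷ Z) ≫ (α_ Z D Z).hom ≫ (Z ◁ ε) = (λ_ Z).hom ≫ (ρ_ Z).inv) :
    (((ρ_ D).inv ≫ (D ◁ η) ≫ (α_ D Z D).inv ≫ (ε ▷ D) ≫ (λ_ D).hom) ▷ Z) ≫ ε = ε := by
  calc _ = 𝟙 _ ⊗≫ D ◁ η ▷ Z ⊗≫ ((ε ▷ (D ⊗ Z)) ≫ (𝟙_ C ◁ ε)) ⊗≫ 𝟙 _ := by monoidal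
    _ = 𝟙 _ ⊗≫ D ◁ η ▷ Z ⊗≫ (((D ⊗ Z : C) ◁ ε) ≫ (ε ▷ 𝟙_ C)) ⊗≫ 𝟙 _ := by
        rw [whisker_exchange]
    _ = 𝟙 _ ⊗≫ (D ◁ ((η ▷ Z) ≫ (α_ Z D Z).hom ≫ (Z ◁ ε))) ⊗≫ (ε ▷ 𝟙_ C) ⊗≫ 𝟙 _ := by
        monoidal
    _ = 𝟙 _ ⊗≫ (D ◁ ((λ_ Z).hom ≫ (ρ_ Z).inv)) ⊗≫ (ε ▷ 𝟙_ C) ⊗≫ 𝟙 _ := by rw [zig1]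
    _ = _ := by monoidal

theorem chase5b {Z D : C} (η : 𝟙_ C ⟶ Z ⊗ D) (ε : D ⊗ Z ⟶ 𝟙_ C) (φ : D ⟶ D)
    (hφ : (φ ▷ Z) ≫ ε = ε) :
    φ ≫ (ρ_ D).inv ≫ (D ◁ η) ≫ (α_ D Z D).inv ≫ (ε ▷ D) ≫ (λ_ D).hom =
      (ρ_ D).inv ≫ (D ◁ η) ≫ (α_ D Z D).inv ≫ (ε ▷ D) ≫ (λ_ D).hom := by
  calc _ = (ρ_ D).inv ≫ (φ ▷ 𝟙_ C) ≫ (D ◁ η) ≫ (α_ D Z D).inv ≫ (ε ▷ D) ≫ (λ_ D).hom := by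
        rw [rightUnitor_inv_naturality_assoc]
    _ = (ρ_ D).inv ≫ (D ◁ η) ≫ (φ ▷ (Z ⊗ D)) ≫ (α_ D Z D).inv ≫ (ε ▷ D) ≫ (λ_ D).hom := by
        rw [← whisker_exchange_assoc]
    _ = (ρ_ D).inv ≫ (D ◁ η) ≫ (α_ D Z D).inv ≫ ((φ ▷ Z) ▷ D) ≫ (ε ▷ D) ≫ (λ_ D).hom := by
        rw [associator_inv_naturality_left_assoc]
    _ = _ := by rw [← comp_whiskerRight_assoc, hφ]

theorem chase6 {Z D D' : C} (η : 𝟙_ C ⟶ Z ⊗ D) (ε : D ⊗ Z ⟶ 𝟙_ C) (π : D ⟶ D') (ι : D' ⟶ D)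
    (hins : ι ≫ ((ρ_ D).inv ≫ (D ◁ η) ≫ (α_ D Z D).inv ≫ (ε ▷ D) ≫ (λ_ D).hom) ≫ π = 𝟙 D') :
    (D' ◁ (η ≫ (Z ◁ π))) ≫ (α_ D' Z D').inv ≫ (((ι ▷ Z) ≫ ε) ▷ D') =
      (ρ_ D').hom ≫ (λ_ D').inv := by
  calc _ = 𝟙 _ ⊗≫ D' ◁ η ⊗≫ (((D' ⊗ Z : C) ◁ π) ≫ ((ι ▷ Z) ▷ D')) ⊗≫ ε ▷ D' ⊗≫ 𝟙 _ := by
        monoidal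
    _ = 𝟙 _ ⊗≫ D' ◁ η ⊗≫ (((ι ▷ Z) ▷ D) ≫ ((D ⊗ Z : C) ◁ π)) ⊗≫ ε ▷ D' ⊗≫ 𝟙 _ := by
        rw [whisker_exchange]
    _ = 𝟙 _ ⊗≫ ((D' ◁ η) ≫ (ι ▷ (Z ⊗ D))) ⊗≫ (((D ⊗ Z : C) ◁ π) ≫ (ε ▷ D')) ⊗≫ 𝟙 _ := by
        monoidal
    _ = 𝟙 _ ⊗≫ ((ι ▷ 𝟙_ C) ≫ (D ◁ η)) ⊗≫ ((ε ▷ D) ≫ (𝟙_ C ◁ π)) ⊗≫ 𝟙 _ := by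
        rw [whisker_exchange, whisker_exchange]
    _ = (ρ_ D').hom ≫ (ι ≫ ((ρ_ D).inv ≫ (D ◁ η) ≫ (α_ D Z D).inv ≫ (ε ▷ D) ≫ (λ_ D).hom) ≫ π) ≫
        (λ_ D').inv := by monoidal
    _ = _ := by rw [hins, Category.id_comp]

theorem chase7 {Z D D' : C} (η : 𝟙_ C ⟶ Z ⊗ D) (ε : D ⊗ Z ⟶ 𝟙_ C) (π : D ⟶ D') (ι : D' ⟶ D)
    (hcomp : ((π ≫ ι) ▷ Z) ≫ ε = ε)
    (zig1 : (η ▷ Z) ≫ (α_ Z D Z).hom ≫ (Z ◁ ε) = (λ_ Z).hom ≫ (ρ_ Z).inv) :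
    ((η ≫ (Z ◁ π)) ▷ Z) ≫ (α_ Z D' Z).hom ≫ (Z ◁ ((ι ▷ Z) ≫ ε)) =
      (λ_ Z).hom ≫ (ρ_ Z).inv := by
  calc _ = (η ▷ Z) ≫ ((Z ◁ π) ▷ Z) ≫ (α_ Z D' Z).hom ≫ (Z ◁ (ι ▷ Z)) ≫ (Z ◁ ε) := by
        rw [comp_whiskerRight, MonoidalCategory.whiskerLeft_comp]
        simp only [Category.assoc]
    _ = (η ▷ Z) ≫ (α_ Z D Z).hom ≫ (Z ◁ (π ▷ Z)) ≫ (Z ◁ (ι ▷ Z)) ≫ (Z ◁ ε) := by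
        rw [associator_naturality_middle_assoc]
    _ = (η ▷ Z) ≫ (α_ Z D Z).hom ≫ (Z ◁ (((π ≫ ι) ▷ Z) ≫ ε)) := by
        simp only [← MonoidalCategory.whiskerLeft_comp, Category.assoc, comp_whiskerRight]
    _ = _ := by rw [hcomp, zig1]

end Statement10Aux
namespace Statement10Aux

variable {C' : Type*} [Category C'] [Abelian C'] [MonoidalCategory C']

set_option maxHeartbeats 1600000 in
theorem exists_rightDual
    (hre₂ : ∀ W : C', PreservesFiniteColimits (tensorRight W))
    {Y Z X : C'} (i : Y ⟶ Z) (p : Z ⟶ X) [Mono i] [Epi p] (w : i ≫ p = 0)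
    (hiker : IsLimit (KernelFork.ofι i w))
    (X' Y' : C') [ExactPairing X X'] [ExactPairing Y Y'] :
    ∃ D : C', Nonempty (ExactPairing Z D) := by
  haveI := hre₂ X'
  haveI := hre₂ Z
  haveI : PreservesLimits (tensorRight X') :=
    (tensorRightAdjunction X X').rightAdjoint_preservesLimits
  haveI : PreservesBinaryBiproducts (tensorRight Z) :=
    preservesBinaryBiproducts_of_preservesBinaryCoproducts _
  haveI : (tensorRight Z).Additive := Functor.additive_of_preservesBinaryBiproducts _
  haveI hepiq : Epi (p ▷ X') := by
    have := (tensorRight X').map_epi p; simpa using this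
  haveI hmonoi' : Mono (i ▷ X') := by
    have := (tensorRight X').map_mono i; simpa using this
  have hw0 : (i ▷ X') ≫ (p ▷ X') = 0 := by
    rw [← comp_whiskerRight, w]
    simpa using (tensorRight X').map_zero Y X
  have hsubZ : ∀ {P Q : C'} (f g : P ⟶ Q), (f - g) ▷ Z = f ▷ Z - g ▷ Z := by
    intro P Q f g
    simpa using (tensorRight Z).map_sub (f := f) (g := g)
  have hzeroZ : ∀ {P Q : C'}, (0 : P ⟶ Q) ▷ Z = 0 := by
    intro P Q
    simpa using (tensorRight Z).map_zero P Q
  -- the object E := pullback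
  set t : pullback (p ▷ X') (η_ X X') ⟶ Z ⊗ X' := pullback.fst _ _ with ht
  set s : pullback (p ▷ X') (η_ X X') ⟶ 𝟙_ C' := pullback.snd _ _ with hs
  have hts : t ≫ (p ▷ X') = s ≫ η_ X X' := pullback.condition
  haveI : Epi s := by rw [hs]; infer_instance
  haveI : Epi (s ▷ Z) := by
    have := (tensorRight Z).map_epi s; simpa using this
  obtain ⟨k, hkt, hks⟩ :
      ∃ k : Y ⊗ X' ⟶ pullback (p ▷ X') (η_ X X'),
        k ≫ t = i ▷ X' ∧ k ≫ s = 0 :=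
    ⟨pullback.lift (i ▷ X') 0 (by rw [hw0, zero_comp]), by rw [ht]; exact pullback.lift_fst _ _ _, by rw [hs]; exact pullback.lift_snd _ _ _⟩
  haveI : Mono k := by
    have : Mono (k ≫ t) := by rw [hkt]; infer_instance
    exact mono_of_mono k t
  -- `i ▷ X'` is a kernel of `p ▷ X'`
  have hiker' : IsLimit (KernelFork.ofι (i ▷ X') hw0) := by
    have h := isLimitForkMapOfIsLimit' (tensorRight X') w hiker
    refine IsLimit.equivOfNatIsoOfIso (Iso.refl _) _ _ ?_ h
    exact Cones.ext (Iso.refl _) (by rintro (_|_) <;> simp)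
  -- `k` is a kernel of `s`
  have hklim : IsLimit (KernelFork.ofι k hks) := by
    refine KernelFork.IsLimit.ofι' k hks (fun {A} a ha => ?_)
    have hcond : (a ≫ t) ≫ (p ▷ X') = 0 := by
      rw [Category.assoc, hts, ← Category.assoc, ha, zero_comp]
    refine ⟨hiker'.lift (KernelFork.ofι (a ≫ t) hcond), ?_⟩
    have hfac : hiker'.lift (KernelFork.ofι (a ≫ t) hcond) ≫ (i ▷ X') = a ≫ t :=
      hiker'.fac _ WalkingParallelPair.zero
    apply pullback.hom_ext
    · rw [Category.assoc, ← ht, hkt, hfac]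
    · rw [Category.assoc, ← hs, hks, comp_zero, ha]
  -- `s` is a cokernel of `k`
  have hscoker : IsColimit (CokernelCofork.ofπ s hks) :=
    Abelian.epiIsCokernelOfKernel (KernelFork.ofι k hks) hklim
  -- the evaluation against X, and the two maps E ⊗ Z ⟶ Z
  obtain ⟨ε₁, hε₁⟩ : ∃ e : X' ⊗ Z ⟶ 𝟙_ C', e = (X' ◁ p) ≫ ε_ X X' := ⟨_, rfl⟩
  obtain ⟨m₁, hm₁⟩ : ∃ m : pullback (p ▷ X') (η_ X X') ⊗ Z ⟶ Z,
      m = (t ▷ Z) ≫ (α_ Z X' Z).hom ≫ (Z ◁ ε₁) ≫ (ρ_ Z).hom := ⟨_, rfl⟩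
  obtain ⟨m₂, hm₂⟩ : ∃ m : pullback (p ▷ X') (η_ X X') ⊗ Z ⟶ Z,
      m = (s ▷ Z) ≫ (λ_ Z).hom := ⟨_, rfl⟩
  have hmp : (m₁ - m₂) ≫ p = 0 := by
    rw [Preadditive.sub_comp, sub_eq_zero, hm₁, hm₂, hε₁]
    exact chase1 p t s hts
  obtain ⟨c, hc⟩ : ∃ c : pullback (p ▷ X') (η_ X X') ⊗ Z ⟶ Y, c ≫ i = m₁ - m₂ :=
    ⟨hiker.lift (KernelFork.ofι (m₁ - m₂) hmp),
      hiker.fac (KernelFork.ofι (m₁ - m₂) hmp) WalkingParallelPair.zero⟩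
  -- the pushout data
  obtain ⟨g, hg⟩ : ∃ g : Y' ⊗ (Y ⊗ X') ⟶ X',
      g = (α_ Y' Y X').inv ≫ (ε_ Y Y' ▷ X') ≫ (λ_ X').hom := ⟨_, rfl⟩
  obtain ⟨ε₂, hε₂⟩ : ∃ e : (Y' ⊗ pullback (p ▷ X') (η_ X X')) ⊗ Z ⟶ 𝟙_ C',
      e = (α_ Y' _ Z).hom ≫ (Y' ◁ c) ≫ ε_ Y Y' := ⟨_, rfl⟩
  set u : Y' ⊗ pullback (p ▷ X') (η_ X X') ⟶ pushout (Y' ◁ k) g := pushout.inl _ _ with hu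
  set v : X' ⟶ pushout (Y' ◁ k) g := pushout.inr _ _ with hv
  have huv : (Y' ◁ k) ≫ u = g ≫ v := pushout.condition
  have hkc : (k ▷ Z) ≫ c = (α_ Y X' Z).hom ≫ (Y ◁ ε₁) ≫ (ρ_ Y).hom := by
    rw [← cancel_mono i, Category.assoc, hc, Preadditive.comp_sub, hm₁, hm₂]
    rw [← Category.assoc (k ▷ Z), ← comp_whiskerRight, hkt]
    rw [← Category.assoc (k ▷ Z), ← comp_whiskerRight, hks, hzeroZ, zero_comp, sub_zero]
    simpa only [Category.assoc] using chase2a i ε₁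
  have hcompat : ((Y' ◁ k) ▷ Z) ≫ ε₂ = (g ▷ Z) ≫ ε₁ := by
    rw [hε₂, hg]
    exact chase2 k c ε₁ hkc
  -- descend to get the evaluation on `D ⊗ Z`
  obtain ⟨ε, hεu, hεv⟩ : ∃ e : pushout (Y' ◁ k) g ⊗ Z ⟶ 𝟙_ C',
      (u ▷ Z) ≫ e = ε₂ ∧ (v ▷ Z) ≫ e = ε₁ := by
    have hpo := isColimitPushoutCoconeMapOfIsColimit (tensorRight Z)
      pushout.condition (pushoutIsPushout (Y' ◁ k) g)
    obtain ⟨e, he₁, he₂⟩ := PushoutCocone.IsColimit.desc' hpo ε₂ ε₁ (by simpa using hcompat)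
    exact ⟨e, he₁, he₂⟩
  -- the two maps from E to `Z ⊗ D`
  obtain ⟨h₁, hh₁⟩ : ∃ h : pullback (p ▷ X') (η_ X X') ⟶ Z ⊗ pushout (Y' ◁ k) g,
      h = t ≫ (Z ◁ v) := ⟨_, rfl⟩
  obtain ⟨h₂, hh₂⟩ : ∃ h : pullback (p ▷ X') (η_ X X') ⟶ Z ⊗ pushout (Y' ◁ k) g,
      h = (λ_ _).inv ≫ (η_ Y Y' ▷ _) ≫ (α_ Y Y' _).hom ≫ (Y ◁ u) ≫ (i ▷ _) := ⟨_, rfl⟩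
  have hkh : k ≫ h₁ = k ≫ h₂ := by
    rw [hh₁, hh₂]
    exact chase3 i k t u v hkt g hg huv
  -- descend to get the coevaluation
  obtain ⟨η, hη⟩ : ∃ e : 𝟙_ C' ⟶ Z ⊗ pushout (Y' ◁ k) g, s ≫ e = h₁ - h₂ := by
    obtain ⟨e, he⟩ := CokernelCofork.IsColimit.desc' hscoker (h₁ - h₂)
      (by rw [Preadditive.comp_sub, hkh, sub_self])
    exact ⟨e, he⟩
  -- the first zig-zag identity
  have zig1 : (η ▷ Z) ≫ (α_ Z _ Z).hom ≫ (Z ◁ ε) = (λ_ Z).hom ≫ (ρ_ Z).inv := by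
    rw [← cancel_epi (s ▷ Z)]
    have e1 : (s ▷ Z) ≫ (η ▷ Z) = (h₁ ▷ Z) - (h₂ ▷ Z) := by
      rw [← comp_whiskerRight, hη, hsubZ]
    calc (s ▷ Z) ≫ (η ▷ Z) ≫ (α_ Z _ Z).hom ≫ (Z ◁ ε)
        = ((h₁ ▷ Z) - (h₂ ▷ Z)) ≫ (α_ Z _ Z).hom ≫ (Z ◁ ε) := by
          rw [← Category.assoc, e1]
      _ = (h₁ ▷ Z) ≫ (α_ Z _ Z).hom ≫ (Z ◁ ε) - (h₂ ▷ Z) ≫ (α_ Z _ Z).hom ≫ (Z ◁ ε) := by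
          rw [Preadditive.sub_comp]
      _ = m₁ ≫ (ρ_ Z).inv - (m₁ - m₂) ≫ (ρ_ Z).inv := by
          congr 1
          · rw [hh₁, chase4A t v ε ε₁ hεv, hm₁]
            simp
          · rw [hh₂, chase4B i u c ε (by rw [hεu, hε₂]), ← Category.assoc, hc]
      _ = m₂ ≫ (ρ_ Z).inv := by rw [← Preadditive.sub_comp, sub_sub_cancel]
      _ = (s ▷ Z) ≫ (λ_ Z).hom ≫ (ρ_ Z).inv := by rw [hm₂]; simp
  -- the idempotent and its splitting
  obtain ⟨ψ, hψ⟩ : ∃ ψ, ψ = (ρ_ (pushout (Y' ◁ k) g)).inv ≫ (_ ◁ η) ≫ (α_ _ Z _).inv ≫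
      (ε ▷ _) ≫ (λ_ _).hom := ⟨_, rfl⟩
  have hψε : (ψ ▷ Z) ≫ ε = ε := by
    rw [hψ]
    exact chase5 η ε zig1
  have hψψ : ψ ≫ ψ = ψ := by
    nth_rewrite 2 [hψ]
    rw [chase5b η ε ψ hψε, ← hψ]
  have hψ0 : ψ ≫ (𝟙 _ - ψ) = 0 := by
    rw [Preadditive.comp_sub, Category.comp_id, hψψ, sub_self]
  obtain ⟨π, hπι⟩ : ∃ π : pushout (Y' ◁ k) g ⟶ kernel (𝟙 _ - ψ),
      π ≫ kernel.ι _ = ψ := ⟨kernel.lift _ ψ hψ0, kernel.lift_ι _ _ _⟩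
  have hιψ : kernel.ι (𝟙 _ - ψ) ≫ ψ = kernel.ι _ := by
    have h0 := kernel.condition (𝟙 _ - ψ)
    rw [Preadditive.comp_sub, Category.comp_id, sub_eq_zero] at h0
    exact h0.symm
  have hιπ : kernel.ι (𝟙 _ - ψ) ≫ π = 𝟙 _ := by
    rw [← cancel_mono (kernel.ι (𝟙 _ - ψ)), Category.assoc, hπι, hιψ, Category.id_comp]
  have hins : kernel.ι (𝟙 _ - ψ) ≫ ψ ≫ π = 𝟙 _ := by
    rw [← Category.assoc, hιψ, hιπ]
  refine ⟨kernel (𝟙 _ - ψ), ⟨⟨η ≫ (Z ◁ π), (kernel.ι _ ▷ Z) ≫ ε, ?_, ?_⟩⟩⟩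
  · exact chase6 η ε π (kernel.ι _) (by rw [← hψ]; exact hins)
  · exact chase7 η ε π (kernel.ι _) (by rw [hπι]; exact hψε) zig1

end Statement10Aux

/-- In an abelian braided monoidal category with right exact tensor
product, given a short exact sequence `0 → Y → Z → X → 0`, if `X` and `Y` are rigid then so
is `Z`. -/
theorem statement10 (C : Type*) [Category C] [Abelian C] [MonoidalCategory C]
    [BraidedCategory C]
    (hre₁ : ∀ W : C, PreservesFiniteColimits (tensorLeft W))
    (hre₂ : ∀ W : C, PreservesFiniteColimits (tensorRight W))
    (S : ShortComplex C) (hS : S.ShortExact)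
    (hY : RigidObj S.X₁) (hX : RigidObj S.X₃) :
    RigidObj S.X₂ := by
  obtain ⟨-, ⟨hYr⟩⟩ := hY
  obtain ⟨-, ⟨hXr⟩⟩ := hX
  haveI := hS.mono_f
  haveI := hS.epi_g
  haveI := hYr
  haveI := hXr
  obtain ⟨D, ⟨pair⟩⟩ := Statement10Aux.exists_rightDual hre₂ S.f S.g S.zero
    hS.exact.fIsKernel (S.X₃ᘁ) (S.X₁ᘁ)
  haveI := pair
  haveI : HasRightDual S.X₂ := ⟨D⟩
  exact ⟨⟨BraidedCategory.hasLeftDualOfHasRightDual⟩, ⟨inferInstance⟩⟩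
end

section
/- Let C be an abelian braided monoidal category with right exact tensor product, and let 0 → Y → Z → X → 0 be a short exact sequence in C. If Z and X are rigid, then Y is rigid. -/
open CategoryTheory MonoidalCategory Limits

set_option linter.unusedSectionVars false
set_option maxHeartbeats 1600000

namespace Statement11Aux

open CategoryTheory.Abelian
open scoped Pseudoelement

noncomputable section

variable {C : Type*} [Category C] [Abelian C] [MonoidalCategory C] [BraidedCategory C]
variable [∀ W : C, PreservesFiniteColimits (tensorLeft W)]
variable [∀ W : C, PreservesFiniteColimits (tensorRight W)]

instance instAddL (W : C) : (tensorLeft W).Additive := by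
  letI := preservesBinaryBiproducts_of_preservesBinaryCoproducts (tensorLeft W)
  exact Functor.additive_of_preservesBinaryBiproducts _

instance instAddR (W : C) : (tensorRight W).Additive := by
  letI := preservesBinaryBiproducts_of_preservesBinaryCoproducts (tensorRight W)
  exact Functor.additive_of_preservesBinaryBiproducts _

theorem monPre : MonoidalPreadditive C := by
  constructor
  · intro X Y Z
    simpa using (tensorLeft X).map_zero Y Z
  · intro X Y Z
    simpa using (tensorRight X).map_zero Y Z
  · intro X Y Z f g
    simpa using (tensorLeft X).map_add (f := f) (g := g)
  · intro X Y Z f g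
    simpa using (tensorRight X).map_add (f := f) (g := g)

theorem epiWhiskerLeft' {A B : C} (T : C) (h : A ⟶ B) [Epi h] : Epi (T ◁ h) := by
  have : Epi ((tensorLeft T).map h) := inferInstance
  simpa using this

theorem epiWhiskerRight' {A B : C} (T : C) (h : A ⟶ B) [Epi h] : Epi (h ▷ T) := by
  have : Epi ((tensorRight T).map h) := inferInstance
  simpa using this

theorem monoWhiskerLeft' {A B : C} (T : C) (h : A ⟶ B) [Mono h]
    [PreservesFiniteLimits (tensorLeft T)] : Mono (T ◁ h) := by
  have : Mono ((tensorLeft T).map h) := inferInstance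
  simpa using this

theorem monoWhiskerRight' {A B : C} (T : C) (h : A ⟶ B) [Mono h]
    [PreservesFiniteLimits (tensorRight T)] : Mono (h ▷ T) := by
  have : Mono ((tensorRight T).map h) := inferInstance
  simpa using this

/-- The dualized morphism `gᘁ` is mono when `g` is epi. -/
theorem mono_rightAdjointMate {Z X : C} (g : Z ⟶ X) [Epi g]
    [HasRightDual Z] [HasRightDual X] : Mono (gᘁ) := by
  apply Preadditive.mono_of_cancel_zero
  intro T t ht
  have h1 : t ▷ X ≫ ε_ X (Xᘁ) = 0 := by
    haveI : Epi (T ◁ g) := epiWhiskerLeft' T g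
    rw [← cancel_epi (T ◁ g), comp_zero, ← Category.assoc, whisker_exchange,
      Category.assoc, ← rightAdjointMate_comp_evaluation, ← Category.assoc,
      ← comp_whiskerRight, ht]
    have : MonoidalPreadditive C := monPre
    simp
  have h2 := tensorRightHomEquiv_whiskerRight_comp_evaluation (X := X) t
  rw [h1] at h2
  have h3 : (tensorRightHomEquiv T X (Xᘁ) (𝟙_ C)) 0 = 0 := by
    have : MonoidalPreadditive C := monPre
    simp [tensorRightHomEquiv]
  rw [h3] at h2
  rw [← cancel_mono (λ_ (Xᘁ : C)).inv, zero_comp]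
  exact h2.symm

section Main

variable {Y Z X : C} (f : Y ⟶ Z) (g : Z ⟶ X)
variable [HasLeftDual Z] [HasRightDual Z] [HasLeftDual X] [HasRightDual X]

/-- The main construction: a right dual of the kernel of `g`. -/
def auxRightDual [Mono f] [Epi g] (w : f ≫ g = 0)
    (hex : (ShortComplex.mk f g w).Exact) : HasRightDual Y := by
  haveI hMP : MonoidalPreadditive C := monPre
  -- exactness instances
  haveI pflZ : PreservesFiniteLimits (tensorLeft Z) := by
    haveI : PreservesLimits (tensorLeft Z) :=
      (tensorLeftAdjunction Z (Zᘁ)).rightAdjoint_preservesLimits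
    infer_instance
  haveI pflX : PreservesFiniteLimits (tensorLeft X) := by
    haveI : PreservesLimits (tensorLeft X) :=
      (tensorLeftAdjunction X (Xᘁ)).rightAdjoint_preservesLimits
    infer_instance
  haveI pfrZd : PreservesFiniteLimits (tensorRight (Zᘁ : C)) := by
    haveI : PreservesLimits (tensorRight (Zᘁ : C)) :=
      (tensorRightAdjunction Z (Zᘁ)).rightAdjoint_preservesLimits
    infer_instance
  haveI pfrXd : PreservesFiniteLimits (tensorRight (Xᘁ : C)) := by
    haveI : PreservesLimits (tensorRight (Xᘁ : C)) :=
      (tensorRightAdjunction X (Xᘁ)).rightAdjoint_preservesLimits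
    infer_instance
  set gd : (Xᘁ : C) ⟶ (Zᘁ : C) := gᘁ with hgd
  haveI hgd_mono : Mono gd := mono_rightAdjointMate g
  -- `(cokernel.π gd) ▷ Y` is a cokernel of `gd ▷ Y`
  have w1 : gd ▷ Y ≫ (cokernel.π gd) ▷ Y = 0 := by
    rw [← comp_whiskerRight, cokernel.condition]; simp
  have hcY : IsColimit (CokernelCofork.ofπ ((cokernel.π gd) ▷ Y) w1) := by
    exact CokernelCofork.mapIsColimit _ (cokernelIsCokernel gd) (tensorRight Y)
  -- `g ▷ cokernel gd` is a cokernel of `f ▷ cokernel gd`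
  have w2 : f ▷ cokernel gd ≫ g ▷ cokernel gd = 0 := by
    rw [← comp_whiskerRight, w]; simp
  have hcW : IsColimit (CokernelCofork.ofπ (g ▷ cokernel gd) w2) := by
    exact CokernelCofork.mapIsColimit _ hex.gIsCokernel (tensorRight (cokernel gd))
  -- exactness of `Z ⊗ Xᘁ ⟶ Z ⊗ Zᘁ ⟶ Z ⊗ W`
  have w3 : Z ◁ gd ≫ Z ◁ cokernel.π gd = 0 := by
    rw [← MonoidalCategory.whiskerLeft_comp, cokernel.condition]; simp
  have hT2 : (ShortComplex.mk (Z ◁ gd) (Z ◁ cokernel.π gd) w3).Exact := by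
    refine ShortComplex.exact_of_g_is_cokernel _ ?_
    exact CokernelCofork.mapIsColimit _ (cokernelIsCokernel gd) (tensorLeft Z)
  -- exactness of `Y ⊗ Xᘁ ⟶ Z ⊗ Xᘁ ⟶ X ⊗ Xᘁ`
  have w4 : f ▷ (Xᘁ : C) ≫ g ▷ (Xᘁ : C) = 0 := by
    rw [← comp_whiskerRight, w]; simp
  have hT3 : (ShortComplex.mk (f ▷ (Xᘁ : C)) (g ▷ (Xᘁ : C)) w4).Exact := by
    exact hex.map (tensorRight (Xᘁ : C))
  -- `f ▷ cokernel gd` is a monomorphism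
  haveI hfW_mono : Mono (f ▷ cokernel gd) := by
    haveI : Mono (f ▷ (Zᘁ : C)) := monoWhiskerRight' _ f
    haveI : Mono (f ▷ (Xᘁ : C)) := monoWhiskerRight' _ f
    haveI : Mono (X ◁ gd) := monoWhiskerLeft' _ _
    haveI : Epi (Y ◁ cokernel.π gd) := epiWhiskerLeft' _ _
    apply Pseudoelement.mono_of_zero_of_map_zero
    intro a ha
    obtain ⟨b, hb⟩ := Pseudoelement.pseudo_surjective_of_epi (Y ◁ cokernel.π gd) a
    have hc0 : (Z ◁ cokernel.π gd) ((f ▷ (Zᘁ : C)) b) = 0 := by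
      rw [← Pseudoelement.comp_apply, ← whisker_exchange, Pseudoelement.comp_apply, hb, ha]
    obtain ⟨d, hd⟩ := Pseudoelement.pseudo_exact_of_exact hT2 _ hc0
    have hd2 : (g ▷ (Xᘁ : C)) d = 0 := by
      apply Pseudoelement.zero_of_map_zero _ (Pseudoelement.pseudo_injective_of_mono (X ◁ gd))
      rw [← Pseudoelement.comp_apply, ← whisker_exchange, Pseudoelement.comp_apply, hd,
        ← Pseudoelement.comp_apply, ← comp_whiskerRight, w,
        MonoidalPreadditive.zero_whiskerRight, Pseudoelement.zero_apply]
    obtain ⟨e, he⟩ := Pseudoelement.pseudo_exact_of_exact hT3 _ hd2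
    have hbe : (Y ◁ gd) e = b := by
      apply Pseudoelement.pseudo_injective_of_mono (f ▷ (Zᘁ : C))
      rw [← Pseudoelement.comp_apply, whisker_exchange, Pseudoelement.comp_apply, he, hd]
    rw [← hb, ← hbe, ← Pseudoelement.comp_apply, ← MonoidalCategory.whiskerLeft_comp,
      cokernel.condition, MonoidalPreadditive.whiskerLeft_zero]
    exact Pseudoelement.zero_apply _ _
  -- the evaluation morphism
  obtain ⟨ev, hev⟩ := CokernelCofork.IsColimit.desc' hcY ((Zᘁ : C) ◁ f ≫ ε_ Z (Zᘁ))
    (by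
      rw [hgd, ← Category.assoc, ← whisker_exchange, Category.assoc,
        rightAdjointMate_comp_evaluation, ← MonoidalCategory.whiskerLeft_comp_assoc, w]
      simp)
  have hev : (cokernel.π gd) ▷ Y ≫ ev = (Zᘁ : C) ◁ f ≫ ε_ Z (Zᘁ) := hev
  -- the coevaluation morphism
  obtain ⟨coev, hcoev⟩ := KernelFork.IsLimit.lift'
    (Abelian.monoIsKernelOfCokernel _ hcW) (η_ Z (Zᘁ) ≫ Z ◁ cokernel.π gd)
    (by
      show (η_ Z (Zᘁ) ≫ Z ◁ cokernel.π gd) ≫ g ▷ cokernel gd = 0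
      rw [Category.assoc, whisker_exchange, ← Category.assoc,
        ← coevaluation_comp_rightAdjointMate, Category.assoc,
        ← MonoidalCategory.whiskerLeft_comp, ← hgd, cokernel.condition]
      simp)
  have hcoev : coev ≫ f ▷ cokernel gd = η_ Z (Zᘁ) ≫ Z ◁ cokernel.π gd := hcoev
  -- assemble the exact pairing
  refine { rightDual := cokernel gd, exact := ?_ }
  refine { coevaluation' := coev, evaluation' := ev,
           coevaluation_evaluation' := ?_, evaluation_coevaluation' := ?_ }
  · -- W ◁ coev ≫ α.inv ≫ ev ▷ W = ρ.hom ≫ λ.inv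
    haveI : Epi ((cokernel.π gd) ▷ (𝟙_ C)) := epiWhiskerRight' _ _
    rw [← cancel_epi ((cokernel.π gd) ▷ (𝟙_ C))]
    slice_lhs 1 2 => rw [← whisker_exchange]
    slice_lhs 2 3 => rw [associator_inv_naturality_left]
    slice_lhs 3 4 => rw [← comp_whiskerRight, hev, comp_whiskerRight]
    slice_lhs 2 3 => rw [← associator_inv_naturality_middle]
    slice_lhs 1 2 => rw [← MonoidalCategory.whiskerLeft_comp, hcoev,
      MonoidalCategory.whiskerLeft_comp]
    slice_lhs 2 3 => rw [associator_inv_naturality_right]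
    slice_lhs 3 4 => rw [whisker_exchange]
    slice_lhs 1 3 => rw [ExactPairing.coevaluation_evaluation]
    simp
  · -- coev ▷ Y ≫ α.hom ≫ Y ◁ ev = λ.hom ≫ ρ.inv
    haveI : Mono ((ρ_ Y).hom ≫ f) := mono_comp _ _
    rw [← cancel_mono ((ρ_ Y).hom ≫ f)]
    slice_lhs 4 5 => rw [← rightUnitor_naturality]
    slice_lhs 3 4 => rw [whisker_exchange]
    slice_lhs 2 3 => rw [← associator_naturality_left]
    slice_lhs 1 2 => rw [← comp_whiskerRight, hcoev, comp_whiskerRight]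
    slice_lhs 2 3 => rw [associator_naturality_middle]
    slice_lhs 3 4 => rw [← MonoidalCategory.whiskerLeft_comp, hev,
      MonoidalCategory.whiskerLeft_comp]
    slice_lhs 2 3 => rw [← associator_naturality_right]
    slice_lhs 1 2 => rw [← whisker_exchange]
    slice_lhs 2 4 => rw [ExactPairing.evaluation_coevaluation]
    simp

end Main

end
end Statement11Aux

/-- In an abelian braided monoidal category with right exact tensor
product, given a short exact sequence `0 → Y → Z → X → 0`, if `Z` and `X` are rigid then so
is `Y`. -/
theorem statement11 (C : Type*) [Category C] [Abelian C] [MonoidalCategory C]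
    [BraidedCategory C]
    (hre₁ : ∀ W : C, PreservesFiniteColimits (tensorLeft W))
    (hre₂ : ∀ W : C, PreservesFiniteColimits (tensorRight W))
    (S : ShortComplex C) (hS : S.ShortExact)
    (hZ : RigidObj S.X₂) (hX : RigidObj S.X₃) :
    RigidObj S.X₁ := by
  haveI : ∀ W : C, PreservesFiniteColimits (tensorLeft W) := hre₁
  haveI : ∀ W : C, PreservesFiniteColimits (tensorRight W) := hre₂
  obtain ⟨⟨hZl⟩, ⟨hZr⟩⟩ := hZ
  obtain ⟨⟨hXl⟩, ⟨hXr⟩⟩ := hX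
  haveI := hZl; haveI := hZr; haveI := hXl; haveI := hXr
  haveI := hS.mono_f
  haveI := hS.epi_g
  haveI hrd : HasRightDual S.X₁ :=
    Statement11Aux.auxRightDual S.f S.g S.zero (by exact hS.exact)
  exact ⟨⟨CategoryTheory.BraidedCategory.hasLeftDualOfHasRightDual⟩, ⟨hrd⟩⟩
end

section
/- Let C be an abelian braided monoidal category with right exact tensor product, and let 0 → Y →^i Z → X → 0 be a short exact sequence with Y and Z rigid. If the dual morphism i* : Z* → Y* is an epimorphism, then X is rigid. -/
open CategoryTheory MonoidalCategory Limits

namespace Statement12Aux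

open CategoryTheory.Abelian
open CategoryTheory.Abelian.Pseudoelement
open scoped Pseudoelement

noncomputable section

variable {C : Type*} [Category C] [Abelian C] [MonoidalCategory C] [BraidedCategory C]

/-- A right adjoint functor preserves finite limits. -/
lemma pfl_of_adj {D E : Type*} [Category D] [Category E] {F : D ⥤ E} {G : E ⥤ D}
    (adj : F ⊣ G) : PreservesFiniteLimits G := by
  haveI : G.IsRightAdjoint := ⟨F, ⟨adj⟩⟩
  exact ⟨fun J _ _ => inferInstance⟩

/-- The key construction: a right dual for the cokernel. -/
theorem key (hre₁ : ∀ W : C, PreservesFiniteColimits (tensorLeft W))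
    (hre₂ : ∀ W : C, PreservesFiniteColimits (tensorRight W))
    {Y Z X : C} [HasRightDual Y] [HasRightDual Z]
    (i : Y ⟶ Z) (p : Z ⟶ X) [Mono i] [Epi p] (hip : i ≫ p = 0)
    (hex : (ShortComplex.mk i p hip).Exact) (hepi : Epi (iᘁ)) :
    Nonempty (HasRightDual X) := by
  classical
  set D : C := kernel (iᘁ) with hD
  set k : D ⟶ (Zᘁ) := kernel.ι (iᘁ) with hk
  -- preservation instances
  haveI := hre₁ X; haveI := hre₁ Y; haveI := hre₁ Z; haveI := hre₁ D
  haveI := hre₂ X; haveI := hre₂ Y; haveI := hre₂ Z; haveI := hre₂ D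
  haveI := hre₂ (Yᘁ); haveI := hre₂ (Zᘁ)
  haveI : PreservesFiniteLimits (tensorLeft Y) := pfl_of_adj (tensorLeftAdjunction Y (Yᘁ))
  haveI : PreservesFiniteLimits (tensorLeft Z) := pfl_of_adj (tensorLeftAdjunction Z (Zᘁ))
  haveI : PreservesFiniteLimits (tensorRight (Yᘁ)) := pfl_of_adj (tensorRightAdjunction Y (Yᘁ))
  haveI : PreservesFiniteLimits (tensorRight (Zᘁ)) := pfl_of_adj (tensorRightAdjunction Z (Zᘁ))
  -- short complexes
  set SC : ShortComplex C := ShortComplex.mk i p hip with hSC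
  have hTC0 : k ≫ (iᘁ) = 0 := kernel.condition _
  set TC : ShortComplex C := ShortComplex.mk k (iᘁ) hTC0 with hTC
  have hTCex : TC.Exact := TC.exact_of_f_is_kernel (kernelIsKernel (iᘁ))
  haveI : Epi TC.g := hepi
  haveI : Mono TC.f := by show Mono k; infer_instance
  -- `p` is the cokernel of `i`
  haveI : Epi SC.g := by show Epi p; infer_instance
  have hcoker : IsColimit (CokernelCofork.ofπ p hip) := hex.gIsCokernel
  -- `iᘁ` is the cokernel of `k`
  have hcoker' : IsColimit (CokernelCofork.ofπ (iᘁ) hTC0) := hTCex.gIsCokernel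
  -- Step 1: `X ◁ k` is a monomorphism, by a pseudoelement chase.
  have hmono : Mono (X ◁ k) := by
    -- exactness facts, as pseudoelement statements
    have exCol2 : ∀ b, ((tensorRight (Zᘁ)).map p) b = 0 →
        ∃ a, ((tensorRight (Zᘁ)).map i) a = b :=
      pseudo_exact_of_exact (hex.map (tensorRight (Zᘁ)))
    have exRow1 : ∀ b, ((tensorLeft Y).map (iᘁ)) b = 0 →
        ∃ a, ((tensorLeft Y).map k) a = b :=
      pseudo_exact_of_exact (hTCex.map (tensorLeft Y))
    haveI : Mono ((tensorRight (Yᘁ)).map i) := inferInstance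
    haveI : Mono ((tensorLeft Z).map k) := inferInstance
    haveI : Epi (p ▷ D) := inferInstanceAs (Epi ((tensorRight D).map p))
    apply mono_of_zero_of_map_zero
    intro t ht
    obtain ⟨s, hs⟩ := pseudo_surjective_of_epi (p ▷ D) t
    have h1 : (p ▷ (Zᘁ)) ((Z ◁ k) s) = 0 := by
      rw [← Pseudoelement.comp_apply, whisker_exchange, Pseudoelement.comp_apply, hs]
      exact ht
    obtain ⟨u, hu⟩ := exCol2 ((Z ◁ k) s) h1
    have h2 : ((tensorLeft Y).map (iᘁ : (Zᘁ) ⟶ (Yᘁ))) u = 0 := by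
      apply zero_of_map_zero _ (pseudo_injective_of_mono ((tensorRight (Yᘁ)).map i))
      show ((i ▷ (Yᘁ))) ((Y ◁ (iᘁ)) u) = 0
      rw [← Pseudoelement.comp_apply, whisker_exchange, Pseudoelement.comp_apply]
      have : ((tensorRight (Zᘁ)).map i) u = (i ▷ (Zᘁ)) u := rfl
      rw [this] at hu
      rw [hu, ← Pseudoelement.comp_apply, ← MonoidalCategory.whiskerLeft_comp, hTC0]
      have : Z ◁ (0 : D ⟶ (Yᘁ)) = (tensorLeft Z).map 0 := rfl
      rw [this, Functor.map_zero, Pseudoelement.zero_apply]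
    obtain ⟨v, hv⟩ := exRow1 u h2
    have h3 : ((tensorLeft Z).map k) ((i ▷ D) v) = ((tensorLeft Z).map k) s := by
      show ((Z ◁ k)) ((i ▷ D) v) = (Z ◁ k) s
      rw [← Pseudoelement.comp_apply, ← whisker_exchange, Pseudoelement.comp_apply]
      have : ((tensorLeft Y).map k) v = (Y ◁ k) v := rfl
      rw [this] at hv
      rw [hv]
      exact hu
    have h4 : (i ▷ D) v = s := pseudo_injective_of_mono _ h3
    rw [← hs, ← h4, ← Pseudoelement.comp_apply, ← comp_whiskerRight, hip]
    have : (0 : Y ⟶ X) ▷ D = (tensorRight D).map 0 := rfl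
    rw [this, Functor.map_zero, Pseudoelement.zero_apply]
  -- Step 2: the evaluation morphism `D ⊗ X ⟶ 𝟙_ C`.
  have hDcoker : IsColimit (CokernelCofork.ofπ ((tensorLeft D).map p)
      (by simp only [← Functor.map_comp, hip, Functor.map_zero]) :
        Cofork ((tensorLeft D).map i) 0) :=
    isColimitCoforkMapOfIsColimit' (tensorLeft D) hip hcoker
  have hev0 : (tensorLeft D).map i ≫ (k ▷ Z ≫ ε_ Z (Zᘁ)) = 0 := by
    show D ◁ i ≫ k ▷ Z ≫ ε_ Z (Zᘁ) = 0
    rw [whisker_exchange_assoc, ← rightAdjointMate_comp_evaluation,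
      ← comp_whiskerRight_assoc, hTC0]
    have : (0 : D ⟶ (Yᘁ)) ▷ Y = (tensorRight Y).map 0 := rfl
    rw [this, Functor.map_zero, zero_comp]
  set ev : D ⊗ X ⟶ 𝟙_ C := hDcoker.desc (CokernelCofork.ofπ _ hev0) with hev
  have hev_fac : D ◁ p ≫ ev = k ▷ Z ≫ ε_ Z (Zᘁ) :=
    Cofork.IsColimit.π_desc hDcoker
  -- Step 3: the coevaluation morphism `𝟙_ C ⟶ X ⊗ D`.
  have hXcoker : IsColimit (CokernelCofork.ofπ ((tensorLeft X).map (iᘁ))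
      (by simp only [← Functor.map_comp, hTC0, Functor.map_zero]) :
        Cofork ((tensorLeft X).map k) 0) :=
    isColimitCoforkMapOfIsColimit' (tensorLeft X) hTC0 hcoker'
  haveI : Mono ((tensorLeft X).map k) := hmono
  have hXker : IsLimit (KernelFork.ofι ((tensorLeft X).map k)
      (CokernelCofork.condition _)) :=
    monoIsKernelOfCokernel _ hXcoker
  have hcoev0 : (η_ Z (Zᘁ) ≫ p ▷ (Zᘁ)) ≫ (tensorLeft X).map (iᘁ) = 0 := by
    show (η_ Z (Zᘁ) ≫ p ▷ (Zᘁ)) ≫ X ◁ (iᘁ) = 0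
    rw [Category.assoc, ← whisker_exchange, coevaluation_comp_rightAdjointMate_assoc,
      ← comp_whiskerRight, hip]
    have : (0 : Y ⟶ X) ▷ (Yᘁ) = (tensorRight (Yᘁ)).map 0 := rfl
    rw [this, Functor.map_zero, comp_zero]
  set coev : 𝟙_ C ⟶ X ⊗ D := hXker.lift (KernelFork.ofι _ hcoev0) with hcoev
  have hcoev_fac : coev ≫ X ◁ k = η_ Z (Zᘁ) ≫ p ▷ (Zᘁ) :=
    Fork.IsLimit.lift_ι hXker
  -- Step 4: the triangle identities.
  refine ⟨{ rightDual := D, exact := ⟨coev, ev, ?_, ?_⟩ }⟩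
  · -- coevaluation_evaluation'
    have hmono' : Mono (𝟙_ C ◁ k) := by
      rw [MonoidalCategory.id_whiskerLeft]
      exact mono_comp _ _
    rw [← cancel_mono (𝟙_ C ◁ k)]
    calc (D ◁ coev ≫ (α_ D X D).inv ≫ ev ▷ D) ≫ 𝟙_ C ◁ k
        = D ◁ (coev ≫ X ◁ k) ≫ (α_ D X (Zᘁ)).inv ≫ ev ▷ (Zᘁ) := by
          simp only [Category.assoc, MonoidalCategory.whiskerLeft_comp]
          rw [← whisker_exchange, ← associator_inv_naturality_right_assoc]
      _ = D ◁ (η_ Z (Zᘁ)) ≫ D ◁ (p ▷ (Zᘁ)) ≫ (α_ D X (Zᘁ)).inv ≫ ev ▷ (Zᘁ) := by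
          rw [hcoev_fac, MonoidalCategory.whiskerLeft_comp, Category.assoc]
      _ = D ◁ (η_ Z (Zᘁ)) ≫ (α_ D Z (Zᘁ)).inv ≫ ((D ◁ p ≫ ev) ▷ (Zᘁ)) := by
          rw [associator_inv_naturality_middle_assoc, comp_whiskerRight]
      _ = D ◁ (η_ Z (Zᘁ)) ≫ (α_ D Z (Zᘁ)).inv ≫ (k ▷ Z) ▷ (Zᘁ) ≫ ε_ Z (Zᘁ) ▷ (Zᘁ) := by
          rw [hev_fac, comp_whiskerRight]
      _ = k ▷ 𝟙_ C ≫ (Zᘁ) ◁ (η_ Z (Zᘁ)) ≫ (α_ (Zᘁ) Z (Zᘁ)).inv ≫ ε_ Z (Zᘁ) ▷ (Zᘁ) := by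
          rw [← associator_inv_naturality_left_assoc, whisker_exchange_assoc]
      _ = k ▷ 𝟙_ C ≫ (ρ_ (Zᘁ)).hom ≫ (λ_ (Zᘁ)).inv := by
          rw [ExactPairing.coevaluation_evaluation]
      _ = ((ρ_ D).hom ≫ (λ_ D).inv) ≫ 𝟙_ C ◁ k := by
          simp
  · -- evaluation_coevaluation'
    have hepi' : Epi (𝟙_ C ◁ p) := by
      rw [MonoidalCategory.id_whiskerLeft]
      exact epi_comp _ _
    rw [← cancel_epi (𝟙_ C ◁ p)]
    calc 𝟙_ C ◁ p ≫ coev ▷ X ≫ (α_ X D X).hom ≫ X ◁ ev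
        = coev ▷ Z ≫ (X ⊗ D) ◁ p ≫ (α_ X D X).hom ≫ X ◁ ev := by
          rw [whisker_exchange_assoc]
      _ = coev ▷ Z ≫ (α_ X D Z).hom ≫ X ◁ (D ◁ p) ≫ X ◁ ev := by
          rw [associator_naturality_right_assoc]
      _ = coev ▷ Z ≫ (α_ X D Z).hom ≫ X ◁ (k ▷ Z) ≫ X ◁ (ε_ Z (Zᘁ)) := by
          rw [← MonoidalCategory.whiskerLeft_comp, hev_fac,
            MonoidalCategory.whiskerLeft_comp]
      _ = (coev ≫ X ◁ k) ▷ Z ≫ (α_ X (Zᘁ) Z).hom ≫ X ◁ (ε_ Z (Zᘁ)) := by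
          rw [← associator_naturality_middle_assoc, ← comp_whiskerRight_assoc]
      _ = η_ Z (Zᘁ) ▷ Z ≫ (p ▷ (Zᘁ)) ▷ Z ≫ (α_ X (Zᘁ) Z).hom ≫ X ◁ (ε_ Z (Zᘁ)) := by
          rw [hcoev_fac, comp_whiskerRight_assoc]
      _ = η_ Z (Zᘁ) ▷ Z ≫ (α_ Z (Zᘁ) Z).hom ≫ p ▷ ((Zᘁ) ⊗ Z) ≫ X ◁ (ε_ Z (Zᘁ)) := by
          rw [associator_naturality_left_assoc]
      _ = η_ Z (Zᘁ) ▷ Z ≫ (α_ Z (Zᘁ) Z).hom ≫ Z ◁ (ε_ Z (Zᘁ)) ≫ p ▷ 𝟙_ C := by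
          rw [← whisker_exchange]
      _ = (λ_ Z).hom ≫ (ρ_ Z).inv ≫ p ▷ 𝟙_ C := by
          rw [ExactPairing.evaluation_coevaluation_assoc]
      _ = 𝟙_ C ◁ p ≫ (λ_ X).hom ≫ (ρ_ X).inv := by
          simp

end

end Statement12Aux

/-- In an abelian braided monoidal category with right exact tensor
product, given a short exact sequence `0 → Y →ⁱ Z → X → 0` with `Y` and `Z` rigid, if the
dual morphism `i* : Z* → Y*` (the mate of `i`) is an epimorphism, then `X` is rigid. -/
theorem statement12 (C : Type*) [Category C] [Abelian C] [MonoidalCategory C]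
    [BraidedCategory C]
    (hre₁ : ∀ W : C, PreservesFiniteColimits (tensorLeft W))
    (hre₂ : ∀ W : C, PreservesFiniteColimits (tensorRight W))
    (S : ShortComplex C) (hS : S.ShortExact)
    [HasRightDual S.X₁] [HasRightDual S.X₂]
    (hY : RigidObj S.X₁) (hZ : RigidObj S.X₂)
    (hepi : Epi ((S.f)ᘁ)) :
    RigidObj S.X₃ := by
  haveI := hS.mono_f
  haveI := hS.epi_g
  obtain ⟨hR⟩ := Statement12Aux.key hre₁ hre₂ S.f S.g S.zero hS.exact hepi
  exact ⟨⟨BraidedCategory.hasLeftDualOfHasRightDual (X := S.X₃)⟩, ⟨hR⟩⟩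
end

section
/- Let C be an artinian monoidal abelian category over an algebraically closed field that is 2-out-of-3 rigid (in every short exact sequence, if two of the three terms are rigid then so is the third). Suppose Irr(C) admits a recursive filtration relative to a subset S of rigid simple objects: an exhaustive increasing filtration Irr_n(C) such that each X ∈ Irr_n(C) appears with multiplicity one in the composition series of some tensor product X_1 ⊗ ⋯ ⊗ X_m of objects whose composition factors lie in S, with all other composition factors in Irr_{n-1}(C). Then every object of C is rigid. -/
open CategoryTheory MonoidalCategory Limits

/-- `Filt P T`: the object `T` admits a finite filtration all of whose subquotients
satisfy `P` (so the composition factors of `T` all lie in `P`, when `P` selects simples). -/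
inductive Filt {C : Type*} [Category C] [Abelian C] (P : C → Prop) : C → Prop
  | of_isZero {T : C} (h : IsZero T) : Filt P T
  | of_ext {S : ShortComplex C} (hS : S.ShortExact) (h1 : Filt P S.X₁) (h3 : P S.X₃) :
      Filt P S.X₂

/-- `FiltOneOf Q X T`: the object `T` has a composition series consisting of a single copy
of `X` together with factors satisfying `Q`; witnessed by a three-step filtration
`Z ⊆ T' ⊆ T` with `Filt Q Z`, `T'/Z ≅ X` and `Filt Q (T/T')`. -/
def FiltOneOf {C : Type*} [Category C] [Abelian C] (Q : C → Prop) (X T : C) : Prop :=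
  ∃ S1 S2 : ShortComplex C, S1.ShortExact ∧ S2.ShortExact ∧
    Filt Q S1.X₁ ∧ Nonempty (S1.X₃ ≅ X) ∧
    Nonempty (S2.X₁ ≅ S1.X₂) ∧ Filt Q S2.X₃ ∧ Nonempty (S2.X₂ ≅ T)

section Aux

open ExactPairing

variable {C : Type*} [Category C] [MonoidalCategory C]

/-- Tensor product of exact pairings. -/
def tensorExactPairing (A B X Y : C) [ExactPairing A B] [ExactPairing X Y] :
    ExactPairing (A ⊗ X) (Y ⊗ B) where
  coevaluation' := η_ A B ⊗≫ A ◁ (η_ X Y ▷ B) ⊗≫ 𝟙 _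
  evaluation' := 𝟙 _ ⊗≫ Y ◁ (ε_ A B ▷ X) ⊗≫ ε_ X Y
  coevaluation_evaluation' := by
    calc
      _ = 𝟙 _ ⊗≫ Y ◁ (B ◁ η_ A B) ⊗≫
          ((Y ⊗ (B ⊗ A)) ◁ (η_ X Y ▷ B) ≫ (Y ◁ ε_ A B) ▷ ((X ⊗ Y) ⊗ B)) ⊗≫
          ε_ X Y ▷ (Y ⊗ B) ⊗≫ 𝟙 _ := by monoidal
      _ = 𝟙 _ ⊗≫ Y ◁ (B ◁ η_ A B) ⊗≫
          ((Y ◁ ε_ A B) ▷ (𝟙_ C ⊗ B) ≫ (Y ⊗ 𝟙_ C) ◁ (η_ X Y ▷ B)) ⊗≫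
          ε_ X Y ▷ (Y ⊗ B) ⊗≫ 𝟙 _ := by rw [whisker_exchange]
      _ = 𝟙 _ ⊗≫ Y ◁ (B ◁ η_ A B ⊗≫ ε_ A B ▷ B) ⊗≫
          (Y ◁ η_ X Y ⊗≫ ε_ X Y ▷ Y) ▷ B ⊗≫ 𝟙 _ := by monoidal
      _ = _ := by rw [coevaluation_evaluation'' A B, coevaluation_evaluation'' X Y]; monoidal
  evaluation_coevaluation' := by
    calc
      _ = 𝟙 _ ⊗≫ η_ A B ▷ (A ⊗ X) ⊗≫
          A ◁ (η_ X Y ▷ ((B ⊗ A) ⊗ X) ≫ (X ⊗ Y) ◁ (ε_ A B ▷ X)) ⊗≫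
          (A ⊗ X) ◁ ε_ X Y ⊗≫ 𝟙 _ := by monoidal
      _ = 𝟙 _ ⊗≫ η_ A B ▷ (A ⊗ X) ⊗≫
          A ◁ (𝟙_ C ◁ (ε_ A B ▷ X) ≫ η_ X Y ▷ (𝟙_ C ⊗ X)) ⊗≫
          (A ⊗ X) ◁ ε_ X Y ⊗≫ 𝟙 _ := by rw [← whisker_exchange]
      _ = 𝟙 _ ⊗≫ (η_ A B ▷ A ⊗≫ A ◁ ε_ A B) ▷ X ⊗≫
          A ◁ (η_ X Y ▷ X ⊗≫ X ◁ ε_ X Y) ⊗≫ 𝟙 _ := by monoidal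
      _ = _ := by rw [evaluation_coevaluation'' A B, evaluation_coevaluation'' X Y]; monoidal

lemma RigidObj.unit : RigidObj (𝟙_ C) := ⟨⟨inferInstance⟩, ⟨inferInstance⟩⟩

lemma RigidObj.tensor {X Y : C} (hX : RigidObj X) (hY : RigidObj Y) : RigidObj (X ⊗ Y) := by
  obtain ⟨⟨lX⟩, ⟨rX⟩⟩ := hX
  obtain ⟨⟨lY⟩, ⟨rY⟩⟩ := hY
  exact ⟨⟨{ leftDual := (ᘁY : C) ⊗ (ᘁX : C),
            exact := tensorExactPairing (ᘁY : C) Y (ᘁX : C) X }⟩,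
    ⟨{ rightDual := Yᘁ ⊗ Xᘁ, exact := tensorExactPairing X (Xᘁ) Y (Yᘁ) }⟩⟩

lemma RigidObj.of_iso {X Y : C} (e : X ≅ Y) (hY : RigidObj Y) : RigidObj X := by
  obtain ⟨⟨lY⟩, ⟨rY⟩⟩ := hY
  exact ⟨⟨{ leftDual := (ᘁY : C), exact := exactPairingCongrRight e }⟩,
    ⟨{ rightDual := Yᘁ, exact := exactPairingCongrLeft e }⟩⟩

lemma rigid_foldr (l : List C) (h : ∀ x ∈ l, RigidObj x) :
    RigidObj (l.foldr (fun A B : C => A ⊗ B) (𝟙_ C)) := by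
  induction l with
  | nil => exact RigidObj.unit
  | cons a l ih =>
    exact RigidObj.tensor (h a (by simp)) (ih fun x hx => h x (by simp [hx]))

end Aux

section AuxAb

variable {C : Type*} [Category C] [Abelian C] [MonoidalCategory C]
  (h23 : ∀ S : ShortComplex C, S.ShortExact →
      ((RigidObj S.X₁ ∧ RigidObj S.X₂ → RigidObj S.X₃) ∧
       (RigidObj S.X₁ ∧ RigidObj S.X₃ → RigidObj S.X₂) ∧
       (RigidObj S.X₂ ∧ RigidObj S.X₃ → RigidObj S.X₁)))

include h23

lemma rigid_of_isZero {T : C} (hT : IsZero T) : RigidObj T := by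
  let S : ShortComplex C := ShortComplex.mk (0 : T ⟶ 𝟙_ C) (𝟙 (𝟙_ C)) (by simp)
  have hmono : Mono S.f := ⟨fun u v _ => hT.eq_of_tgt u v⟩
  have hepi : Epi S.g := by dsimp [S]; infer_instance
  have hex : S.Exact := by
    rw [S.exact_iff_mono rfl]
    dsimp [S]; infer_instance
  exact (h23 S ⟨hex⟩).2.2 ⟨RigidObj.unit, RigidObj.unit⟩

lemma rigid_of_filt {P : C → Prop} (hP : ∀ X, P X → RigidObj X) {T : C}
    (hT : Filt P T) : RigidObj T := by
  induction hT with
  | of_isZero h => exact rigid_of_isZero h23 h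
  | of_ext hS h1 h3 ih => exact (h23 _ hS).2.1 ⟨ih, hP _ h3⟩

end AuxAb

/-- Let `C` be an artinian monoidal abelian category over an algebraically
closed field `k` which is 2-out-of-3 rigid, and suppose the simple objects of `C` admit a
recursive filtration `Irr_n` relative to a set `S` of rigid simple objects: every
`X ∈ Irr_n` occurs with multiplicity one in the composition series of some tensor product
`X_1 ⊗ ⋯ ⊗ X_m` of objects with composition factors in `S`, all the other composition
factors lying in `⋃_{m < n} Irr_m`.  Then every object of `C` is rigid. -/
theorem statement15 (k : Type*) [Field k] [IsAlgClosed k]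
    (C : Type*) [Category C] [Abelian C] [MonoidalCategory C] [Preadditive C] [Linear k C]
    (hhom : ∀ X Y : C, FiniteDimensional k (X ⟶ Y))
    (hartin : ∀ X : C, Filt (fun T : C => Simple T) X)
    (h23 : ∀ S : ShortComplex C, S.ShortExact →
      ((RigidObj S.X₁ ∧ RigidObj S.X₂ → RigidObj S.X₃) ∧
       (RigidObj S.X₁ ∧ RigidObj S.X₃ → RigidObj S.X₂) ∧
       (RigidObj S.X₂ ∧ RigidObj S.X₃ → RigidObj S.X₁)))
    (Sset : Set C)
    (hSset : ∀ X ∈ Sset, Simple X ∧ RigidObj X)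
    (Irr : ℕ → Set C)
    (hIrrSimple : ∀ n, ∀ X ∈ Irr n, Simple X)
    (hIrrMono : Monotone Irr)
    (hIrrExh : ∀ X : C, Simple X → ∃ n, X ∈ Irr n)
    (hrec : ∀ n : ℕ, ∀ X ∈ Irr n, ∃ (m : ℕ) (Xs : Fin m → C),
      (∀ i, Filt (fun T => T ∈ Sset) (Xs i)) ∧
      FiltOneOf (fun T => ∃ m' < n, T ∈ Irr m') X
        ((List.ofFn Xs).foldr (fun A B => A ⊗ B) (𝟙_ C))) :
    ∀ X : C, RigidObj X := by
  have e : (Preadditive.preadditiveHasZeroMorphisms : HasZeroMorphisms C) =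
      @Preadditive.preadditiveHasZeroMorphisms C _ Abelian.toPreadditive :=
    Subsingleton.elim _ _
  rw [e] at h23
  have key : ∀ n : ℕ, ∀ X ∈ Irr n, RigidObj X := by
    intro n
    induction n using Nat.strong_induction_on with
    | _ n ih =>
      intro X hX
      obtain ⟨m, Xs, hXs, S1, S2, hS1, hS2, hF1, ⟨e13⟩, ⟨e21⟩, hF3, ⟨e2T⟩⟩ := hrec n X hX
      have hQ : ∀ T : C, (∃ m' < n, T ∈ Irr m') → RigidObj T := by
        rintro T ⟨m', hm', hT⟩
        exact ih m' hm' T hT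
      have hT : RigidObj ((List.ofFn Xs).foldr (fun A B : C => A ⊗ B) (𝟙_ C)) := by
        apply rigid_foldr
        intro x hx
        obtain ⟨i, rfl⟩ := List.mem_ofFn.mp hx
        exact rigid_of_filt h23 (fun Y hY => (hSset Y hY).2) (hXs i)
      have h22 := RigidObj.of_iso e2T hT
      have h21 := (h23 S2 hS2).2.2 ⟨h22, rigid_of_filt h23 hQ hF3⟩
      have h12 := RigidObj.of_iso e21.symm h21
      have h13 := (h23 S1 hS1).1 ⟨rigid_of_filt h23 hQ hF1, h12⟩
      exact RigidObj.of_iso e13.symm h13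
  intro X
  refine rigid_of_filt h23 (fun T hT => ?_) (hartin X)
  obtain ⟨n, hn⟩ := hIrrExh T hT
  exact key n T hn
end
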